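/- Let T be a spherically symmetric rooted tree, with N_k = card{β ∈ E(T) : |β| = k} edges at level k. Then for 1 < p < ∞, the p-capacity of its boundary is c_p(∂T) = ( Σ_{k=0}^∞ N_k^{1−p′} )^{1−p}, where 1/p + 1/p′ = 1 (with the convention c_p(∂T) = 0 when the series diverges). -/

import Mathlib

open scoped ENNReal
open MeasureTheory

/-- A locally finite rooted tree, given by its set of edges. The root edge has no parent,
every other edge has a parent, and every edge has finitely many children. -/
structure RTree where
  E : Type
  root : E
  parent : E → Option E
  parent_root : parent root = none
  parent_isSome : ∀ α, α ≠ root → (parent α).isSome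
  level : E → ℕ
  level_root : level root = 0
  level_parent : ∀ α β, parent α = some β → level α = level β + 1
  locFin : ∀ α, {β | parent β = some α}.Finite

namespace RTree

variable (T : RTree)

/-- `Le T α β` : the edge `α` is an ancestor of (or equal to) the edge `β`,
i.e. `α ≤ β` in the natural partial order on edges. -/
def Le (α β : T.E) : Prop :=
  Relation.ReflTransGen (fun x y => T.parent y = some x) α β

/-- The boundary of `T`: half-infinite geodesics starting at the root edge. -/
structure Boundary where
  seq : ℕ → T.E
  seq_zero : seq 0 = T.root
  seq_parent : ∀ n, T.parent (seq (n + 1)) = some (seq n)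

/-- The boundary `∂T_α` of the tent over the edge `α`: boundary points whose
geodesic passes through `α`. -/
def tentB (α : T.E) : Set T.Boundary := {ζ | ∃ n, ζ.seq n = α}

/-- The standard topology on the boundary, with the tent boundaries as a basis. -/
def ttop : TopologicalSpace T.Boundary :=
  TopologicalSpace.generateFrom {s | ∃ α, s = T.tentB α}

/-- The Borel σ-algebra on the boundary. -/
def tborel : MeasurableSpace T.Boundary := @borel _ T.ttop

/-- The set of edges of the tent `T_α`. -/
def tentE (α : T.E) : Set T.E := {β | T.Le α β}

/-- The relative potential `I_α f (ζ)`, summing `f` over the edges of the geodesic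
from the root to `ζ` that lie in the tent `T_α`.  Taking `α` to be the root edge
gives the potential `If`. -/
noncomputable def relPot (α : T.E) (f : T.E → ℝ≥0∞) (ζ : T.Boundary) : ℝ≥0∞ :=
  ∑' n, Set.indicator (T.tentE α) f (ζ.seq n)

/-- The relative `p`-energy `‖f‖_{ℓ^p(E(T_α))}^p`. -/
noncomputable def relEnergy (p : ℝ) (α : T.E) (f : T.E → ℝ≥0∞) : ℝ≥0∞ :=
  ∑' β, Set.indicator (T.tentE α) (fun γ => f γ ^ p) β

/-- The relative `p`-capacity `c_{p,α}(E)` of `E ⊆ ∂T`, with the tent `T_α`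
as ambient tree. -/
noncomputable def relCap (p : ℝ) (α : T.E) (E : Set T.Boundary) : ℝ≥0∞ :=
  ⨅ f ∈ {f : T.E → ℝ≥0∞ | ∀ ζ ∈ E, 1 ≤ T.relPot α f ζ}, T.relEnergy p α f

/-- The `p`-capacity of a subset of the boundary. -/
noncomputable def cap (p : ℝ) (E : Set T.Boundary) : ℝ≥0∞ := T.relCap p T.root E

end RTree

open RTree

namespace RTree
variable {T : RTree}

lemma eq_root_of_level_eq_zero {β : T.E} (h : T.level β = 0) : β = T.root := by
  by_contra hβ
  obtain ⟨α, hα⟩ := Option.isSome_iff_exists.1 (T.parent_isSome β hβ)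
  have := T.level_parent β α hα
  omega

lemma level_le_of_le {α β : T.E} (h : T.Le α β) : T.level α ≤ T.level β := by
  induction h with
  | refl => exact le_rfl
  | tail _ hstep ih => have := T.level_parent _ _ hstep; omega

lemma eq_of_le_of_level_le {α β : T.E} (h : T.Le α β) (hl : T.level β ≤ T.level α) : α = β := by
  rcases Relation.ReflTransGen.cases_head h with rfl | ⟨c, hc, hcb⟩
  · rfl
  · exfalso
    have h1 := T.level_parent _ _ hc
    have h2 := level_le_of_le hcb
    omega

lemma root_le (β : T.E) : T.Le T.root β := by
  generalize hn : T.level β = n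
  induction n generalizing β with
  | zero => rw [eq_root_of_level_eq_zero hn]; exact .refl
  | succ n ih =>
    have hβ : β ≠ T.root := fun h => by rw [h, T.level_root] at hn; omega
    obtain ⟨α, hα⟩ := Option.isSome_iff_exists.1 (T.parent_isSome β hβ)
    have hl := T.level_parent β α hα
    exact (ih α (by omega)).tail hα

lemma exists_mid {α β : T.E} (h : T.Le α β) {m : ℕ} (h1 : T.level α ≤ m) (h2 : m ≤ T.level β) :
    ∃ γ, T.Le α γ ∧ T.Le γ β ∧ T.level γ = m := by
  induction h with
  | refl => exact ⟨α, .refl, .refl, le_antisymm h1 h2⟩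
  | @tail b c hab hstep ih =>
    have hl := T.level_parent _ _ hstep
    rcases Nat.lt_or_ge m (T.level c) with hm | hm
    · obtain ⟨γ, hγ1, hγ2, hγ3⟩ := ih (by omega)
      exact ⟨γ, hγ1, hγ2.tail hstep, hγ3⟩
    · exact ⟨c, hab.tail hstep, .refl, by omega⟩

lemma levelSet_finite (T : RTree) : ∀ k, {β : T.E | T.level β = k}.Finite := by
  intro k; induction k with
  | zero =>
    exact Set.Finite.subset (Set.finite_singleton T.root)
      (fun β hβ => eq_root_of_level_eq_zero hβ)
  | succ k ih =>
    refine Set.Finite.subset (Set.Finite.biUnion ih (fun α _ => T.locFin α)) ?_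
    intro β hβ
    have hβr : β ≠ T.root := fun h => by
      rw [h] at hβ; simp only [Set.mem_setOf_eq, T.level_root] at hβ; omega
    obtain ⟨α, hα⟩ := Option.isSome_iff_exists.1 (T.parent_isSome β hβr)
    have := T.level_parent β α hα
    exact Set.mem_biUnion (show T.level α = k by simp only [Set.mem_setOf_eq] at hβ ⊢; omega) hα

lemma levelSet_nonempty (hleaf : ∀ α : T.E, ∃ β, T.parent β = some α) (k : ℕ) :
    ∃ β : T.E, T.level β = k := by
  induction k with
  | zero => exact ⟨T.root, T.level_root⟩
  | succ k ih =>
    obtain ⟨α, hα⟩ := ih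
    obtain ⟨β, hβ⟩ := hleaf α
    exact ⟨β, by rw [T.level_parent β α hβ, hα]⟩

lemma seq_level (ζ : T.Boundary) (n : ℕ) : T.level (ζ.seq n) = n := by
  induction n with
  | zero => rw [ζ.seq_zero, T.level_root]
  | succ n ih => rw [T.level_parent _ _ (ζ.seq_parent n), ih]

noncomputable def psum (T : RTree) (w : T.E → ℝ≥0∞) (β : T.E) : ℝ≥0∞ :=
  match h : T.parent β with
  | none => w β
  | some α => T.psum w α + w β
termination_by T.level β
decreasing_by
  have := T.level_parent β α h; omega

lemma psum_root (w : T.E → ℝ≥0∞) : T.psum w T.root = w T.root := by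
  rw [psum, T.parent_root]

lemma psum_parent {w : T.E → ℝ≥0∞} {β α : T.E} (h : T.parent β = some α) :
    T.psum w β = T.psum w α + w β := by
  rw [psum, h]

lemma psum_mono {w : T.E → ℝ≥0∞} {α β : T.E} (h : T.Le α β) : T.psum w α ≤ T.psum w β := by
  induction h with
  | refl => exact le_rfl
  | tail _ hstep ih => rw [psum_parent hstep]; exact ih.trans le_self_add

lemma psum_seq {w : T.E → ℝ≥0∞} (ζ : T.Boundary) (n : ℕ) :
    T.psum w (ζ.seq n) = ∑ k ∈ Finset.range (n + 1), w (ζ.seq k) := by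
  induction n with
  | zero => rw [Finset.sum_range_one, ζ.seq_zero, psum_root]
  | succ n ih =>
    conv_rhs => rw [Finset.sum_range_succ]
    rw [psum_parent (ζ.seq_parent n), ih]


lemma fiber_finite (T : RTree) (k : ℕ) : Finite {β : T.E // T.level β = k} :=
  (levelSet_finite T k).to_subtype

lemma children_finite (T : RTree) (α : T.E) : Finite {γ : T.E // T.parent γ = some α} :=
  (T.locFin α).to_subtype

lemma card_level_zero (T : RTree) : Nat.card {β : T.E // T.level β = 0} = 1 := by
  haveI : Unique {β : T.E // T.level β = 0} :=
    ⟨⟨⟨T.root, T.level_root⟩⟩, fun a => Subtype.ext (eq_root_of_level_eq_zero a.2)⟩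
  exact Nat.card_unique

lemma card_level_pos (hleaf : ∀ α : T.E, ∃ β, T.parent β = some α) (k : ℕ) :
    0 < Nat.card {β : T.E // T.level β = k} := by
  haveI := fiber_finite T k
  obtain ⟨β, hβ⟩ := levelSet_nonempty hleaf k
  haveI : Nonempty {β : T.E // T.level β = k} := ⟨⟨β, hβ⟩⟩
  exact Nat.card_pos

noncomputable def sigmaEquiv (T : RTree) (k : ℕ) :
    (Σ α : {α : T.E // T.level α = k}, {γ : T.E // T.parent γ = some α.1}) ≃
      {β : T.E // T.level β = k + 1} := by
  refine Equiv.ofBijective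
    (fun x => ⟨x.2.1, by rw [T.level_parent _ _ x.2.2, x.1.2]⟩) ⟨?_, ?_⟩
  · rintro ⟨⟨α₁, h₁⟩, ⟨γ₁, hg₁⟩⟩ ⟨⟨α₂, h₂⟩, ⟨γ₂, hg₂⟩⟩ h
    simp only [Subtype.mk.injEq] at h
    subst h
    rw [hg₁] at hg₂
    obtain rfl : α₁ = α₂ := Option.some_injective _ hg₂
    rfl
  · rintro ⟨β, hβ⟩
    have hβr : β ≠ T.root := fun h => by rw [h, T.level_root] at hβ; omega
    obtain ⟨α, hα⟩ := Option.isSome_iff_exists.1 (T.parent_isSome β hβr)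
    have hl := T.level_parent β α hα
    exact ⟨⟨⟨α, by omega⟩, ⟨β, hα⟩⟩, rfl⟩

lemma tsum_const_finite (ι : Type) [Finite ι] (c : ℝ≥0∞) :
    ∑' _ : ι, c = Nat.card ι * c := by
  haveI : Fintype ι := Fintype.ofFinite _
  rw [tsum_fintype, Finset.sum_const, Finset.card_univ, Nat.card_eq_fintype_card, nsmul_eq_mul]

lemma card_level_succ (T : RTree)
    (hsym : ∀ α β : T.E, T.level α = T.level β →
      Nat.card {γ : T.E // T.parent γ = some α} = Nat.card {γ : T.E // T.parent γ = some β})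
    (k : ℕ) (α₀ : T.E) (h₀ : T.level α₀ = k) :
    Nat.card {β : T.E // T.level β = k + 1} =
      Nat.card {β : T.E // T.level β = k} * Nat.card {γ : T.E // T.parent γ = some α₀} := by
  haveI := fiber_finite T k
  haveI : Fintype {α : T.E // T.level α = k} := Fintype.ofFinite _
  haveI : ∀ α : {α : T.E // T.level α = k}, Fintype {γ : T.E // T.parent γ = some α.1} :=
    fun α => @Fintype.ofFinite _ (children_finite T α.1)
  rw [← Nat.card_congr (sigmaEquiv T k), Nat.card_eq_fintype_card, Fintype.card_sigma]
  have : ∀ α : {α : T.E // T.level α = k},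
      Fintype.card {γ : T.E // T.parent γ = some α.1} =
        Nat.card {γ : T.E // T.parent γ = some α₀} := by
    intro α
    rw [← Nat.card_eq_fintype_card]
    exact hsym α.1 α₀ (by rw [α.2, h₀])
  simp only [this]
  haveI : Fintype {γ : T.E // T.parent γ = some α₀} := @Fintype.ofFinite _ (children_finite T α₀)
  rw [Finset.sum_const, Finset.card_univ, smul_eq_mul, Nat.card_eq_fintype_card,
    Nat.card_eq_fintype_card]

lemma tsum_levels (T : RTree) (g : T.E → ℝ≥0∞) :
    ∑' β : T.E, g β = ∑' k : ℕ, ∑' β : {β : T.E // T.level β = k}, g β.1 := by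
  rw [← (Equiv.sigmaFiberEquiv T.level).tsum_eq g, ENNReal.tsum_sigma']
  rfl



noncomputable def wgt (T : RTree) (f : T.E → ℝ≥0∞) (p : ℝ) (β : T.E) : ℝ≥0∞ :=
  (Nat.card {α : T.E // T.level α = T.level β} : ℝ≥0∞) * f β ^ p

lemma tsum_psum_le (T : RTree)
    (hleaf : ∀ α : T.E, ∃ β, T.parent β = some α)
    (hsym : ∀ α β : T.E, T.level α = T.level β →
      Nat.card {γ : T.E // T.parent γ = some α} = Nat.card {γ : T.E // T.parent γ = some β})
    (f : T.E → ℝ≥0∞) (p : ℝ) (n : ℕ) :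
    ∑' β : {β : T.E // T.level β = n}, T.psum (wgt T f p) β.1 ≤
      (Nat.card {β : T.E // T.level β = n} : ℝ≥0∞) *
        ∑ k ∈ Finset.range (n + 1), ∑' β : {β : T.E // T.level β = k}, f β.1 ^ p := by
  induction n with
  | zero =>
    have h1 : ∀ β : {β : T.E // T.level β = 0}, T.psum (wgt T f p) β.1 = wgt T f p β.1 := by
      intro β
      have hb : β.1 = T.root := eq_root_of_level_eq_zero β.2
      rw [hb, psum_root]
    have h2 : ∀ β : {β : T.E // T.level β = 0}, wgt T f p β.1 =
        (Nat.card {α : T.E // T.level α = 0} : ℝ≥0∞) * f β.1 ^ p := by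
      intro β; rw [wgt, β.2]
    rw [tsum_congr h1, tsum_congr h2, ENNReal.tsum_mul_left, Finset.sum_range_one]
  | succ n ih =>
    obtain ⟨α₀, hα₀⟩ := levelSet_nonempty hleaf n
    have hdec : ∑' β : {β : T.E // T.level β = n + 1}, T.psum (wgt T f p) β.1
        = ∑' α : {α : T.E // T.level α = n}, ∑' γ : {γ : T.E // T.parent γ = some α.1},
            (T.psum (wgt T f p) α.1 + wgt T f p γ.1) := by
      rw [← (sigmaEquiv T n).tsum_eq (fun β => T.psum (wgt T f p) β.1), ENNReal.tsum_sigma']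
      exact tsum_congr fun α => tsum_congr fun γ => psum_parent γ.2
    have hsplit : ∀ α : {α : T.E // T.level α = n},
        ∑' γ : {γ : T.E // T.parent γ = some α.1},
          (T.psum (wgt T f p) α.1 + wgt T f p γ.1)
        = (Nat.card {γ : T.E // T.parent γ = some α₀} : ℝ≥0∞) * T.psum (wgt T f p) α.1 +
            ∑' γ : {γ : T.E // T.parent γ = some α.1}, wgt T f p γ.1 := by
      intro α
      rw [ENNReal.tsum_add]
      congr 1
      haveI := children_finite T α.1
      rw [tsum_const_finite, hsym α.1 α₀ (by rw [α.2, hα₀])]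
    have hw : ∑' α : {α : T.E // T.level α = n},
        ∑' γ : {γ : T.E // T.parent γ = some α.1}, wgt T f p γ.1
        = (Nat.card {β : T.E // T.level β = n + 1} : ℝ≥0∞) *
            ∑' β : {β : T.E // T.level β = n + 1}, f β.1 ^ p := by
      have e1 : ∑' α : {α : T.E // T.level α = n},
          ∑' γ : {γ : T.E // T.parent γ = some α.1}, wgt T f p γ.1
          = ∑' β : {β : T.E // T.level β = n + 1}, wgt T f p β.1 := by
        rw [← (sigmaEquiv T n).tsum_eq (fun β => wgt T f p β.1), ENNReal.tsum_sigma']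
        exact tsum_congr fun α => tsum_congr fun γ => rfl
      have e2 : ∀ β : {β : T.E // T.level β = n + 1}, wgt T f p β.1 =
          (Nat.card {α : T.E // T.level α = n + 1} : ℝ≥0∞) * f β.1 ^ p := by
        intro β; rw [wgt, β.2]
      rw [e1, tsum_congr e2, ENNReal.tsum_mul_left]
    have hcard : (Nat.card {γ : T.E // T.parent γ = some α₀} : ℝ≥0∞) *
        (Nat.card {β : T.E // T.level β = n} : ℝ≥0∞)
        = (Nat.card {β : T.E // T.level β = n + 1} : ℝ≥0∞) := by
      rw [card_level_succ T hsym n α₀ hα₀]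
      push_cast
      ring
    calc ∑' β : {β : T.E // T.level β = n + 1}, T.psum (wgt T f p) β.1
        = (Nat.card {γ : T.E // T.parent γ = some α₀} : ℝ≥0∞) *
            (∑' α : {α : T.E // T.level α = n}, T.psum (wgt T f p) α.1) +
          (Nat.card {β : T.E // T.level β = n + 1} : ℝ≥0∞) *
            ∑' β : {β : T.E // T.level β = n + 1}, f β.1 ^ p := by
          rw [hdec, tsum_congr hsplit, ENNReal.tsum_add, ENNReal.tsum_mul_left, hw]
      _ ≤ (Nat.card {γ : T.E // T.parent γ = some α₀} : ℝ≥0∞) *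
            ((Nat.card {β : T.E // T.level β = n} : ℝ≥0∞) *
              ∑ k ∈ Finset.range (n + 1), ∑' β : {β : T.E // T.level β = k}, f β.1 ^ p) +
          (Nat.card {β : T.E // T.level β = n + 1} : ℝ≥0∞) *
            ∑' β : {β : T.E // T.level β = n + 1}, f β.1 ^ p := by
          gcongr
      _ = (Nat.card {β : T.E // T.level β = n + 1} : ℝ≥0∞) *
            ∑ k ∈ Finset.range (n + 1 + 1), ∑' β : {β : T.E // T.level β = k}, f β.1 ^ p := by
          rw [← mul_assoc, hcard,
            Finset.sum_range_succ (fun k => ∑' β : {β : T.E // T.level β = k}, f β.1 ^ p) (n + 1),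
            mul_add]

lemma exists_psum_le (T : RTree)
    (hleaf : ∀ α : T.E, ∃ β, T.parent β = some α)
    (hsym : ∀ α β : T.E, T.level α = T.level β →
      Nat.card {γ : T.E // T.parent γ = some α} = Nat.card {γ : T.E // T.parent γ = some β})
    (f : T.E → ℝ≥0∞) (p : ℝ) (n : ℕ) :
    ∃ β : T.E, T.level β = n ∧ T.psum (wgt T f p) β ≤ ∑' β : T.E, f β ^ p := by
  haveI := fiber_finite T n
  haveI : Fintype {β : T.E // T.level β = n} := Fintype.ofFinite _
  obtain ⟨β₀, hβ₀⟩ := levelSet_nonempty hleaf n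
  have hne : (Finset.univ : Finset {β : T.E // T.level β = n}).Nonempty :=
    ⟨⟨β₀, hβ₀⟩, Finset.mem_univ _⟩
  obtain ⟨m, _, hm⟩ := Finset.exists_min_image Finset.univ
    (fun β : {β : T.E // T.level β = n} => T.psum (wgt T f p) β.1) hne
  refine ⟨m.1, m.2, ?_⟩
  have hNne : (Nat.card {β : T.E // T.level β = n} : ℝ≥0∞) ≠ 0 := by
    exact_mod_cast (card_level_pos hleaf n).ne'
  have hNtop : (Nat.card {β : T.E // T.level β = n} : ℝ≥0∞) ≠ ⊤ := ENNReal.natCast_ne_top _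
  have key : (Nat.card {β : T.E // T.level β = n} : ℝ≥0∞) * T.psum (wgt T f p) m.1 ≤
      (Nat.card {β : T.E // T.level β = n} : ℝ≥0∞) * ∑' β : T.E, f β ^ p := by
    have h1 : (Nat.card {β : T.E // T.level β = n} : ℝ≥0∞) * T.psum (wgt T f p) m.1 ≤
        ∑' β : {β : T.E // T.level β = n}, T.psum (wgt T f p) β.1 := by
      rw [← tsum_const_finite]
      exact ENNReal.tsum_le_tsum fun β => hm β (Finset.mem_univ β)
    have h2 := tsum_psum_le T hleaf hsym f p n
    have h3 : ∑ k ∈ Finset.range (n + 1), ∑' β : {β : T.E // T.level β = k}, f β.1 ^ p ≤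
        ∑' β : T.E, f β ^ p := by
      rw [tsum_levels T (fun β => f β ^ p)]
      exact ENNReal.sum_le_tsum _
    exact h1.trans (h2.trans (by gcongr))
  exact (ENNReal.mul_le_mul_iff_right hNne hNtop).1 key

lemma exists_chain {X : Type} (r : X → X → Prop) (P : X → Prop) (a : X) (ha : P a)
    (h : ∀ b, P b → ∃ c, r b c ∧ P c) :
    ∃ g : ℕ → X, g 0 = a ∧ (∀ n, P (g n)) ∧ ∀ n, r (g n) (g (n + 1)) := by
  choose F h1 h2 using h
  let g : ℕ → {x // P x} := fun n => Nat.rec ⟨a, ha⟩ (fun _ b => ⟨F b.1 b.2, h2 b.1 b.2⟩) n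
  exact ⟨fun n => (g n).1, rfl, fun n => (g n).2, fun n => h1 (g n).1 (g n).2⟩

lemma exists_boundary_psum_le (T : RTree)
    (hleaf : ∀ α : T.E, ∃ β, T.parent β = some α)
    (hsym : ∀ α β : T.E, T.level α = T.level β →
      Nat.card {γ : T.E // T.parent γ = some α} = Nat.card {γ : T.E // T.parent γ = some β})
    (f : T.E → ℝ≥0∞) (p : ℝ) :
    ∃ ζ : T.Boundary, ∀ n, T.psum (wgt T f p) (ζ.seq n) ≤ ∑' β : T.E, f β ^ p := by
  set Ef := ∑' β : T.E, f β ^ p with hEf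
  set Good : T.E → Prop := fun β => ∀ n, T.level β ≤ n →
    ∃ γ, T.level γ = n ∧ T.Le β γ ∧ T.psum (wgt T f p) γ ≤ Ef with hGood
  have hroot : Good T.root := by
    intro n _
    obtain ⟨β, hβ1, hβ2⟩ := exists_psum_le T hleaf hsym f p n
    exact ⟨β, hβ1, root_le β, hβ2⟩
  have hstep : ∀ β, Good β → ∃ γ, T.parent γ = some β ∧ Good γ := by
    intro β hβ
    by_contra hcon
    push_neg at hcon
    haveI := children_finite T β
    haveI : Fintype {γ : T.E // T.parent γ = some β} := Fintype.ofFinite _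
    have hng' : ∀ γ : {γ : T.E // T.parent γ = some β}, ∃ n, T.level γ.1 ≤ n ∧
        ∀ δ, T.level δ = n → T.Le γ.1 δ → Ef < T.psum (wgt T f p) δ := by
      intro γ
      have hng := hcon γ.1 γ.2
      simp only [hGood] at hng
      push_neg at hng
      obtain ⟨n, hn1, hn2⟩ := hng
      exact ⟨n, hn1, hn2⟩
    choose nn hn1 hn2 using hng'
    obtain ⟨γ₀, hγ₀⟩ := hleaf β
    have hlγ₀ := T.level_parent γ₀ β hγ₀
    set M := Finset.univ.sup nn with hM
    have hMγ : ∀ γ : {γ : T.E // T.parent γ = some β}, nn γ ≤ M :=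
      fun γ => Finset.le_sup (Finset.mem_univ γ)
    have hMβ : T.level β < M := by
      have t1 : T.level γ₀ ≤ nn ⟨γ₀, hγ₀⟩ := hn1 ⟨γ₀, hγ₀⟩
      have t2 := hMγ ⟨γ₀, hγ₀⟩
      omega
    obtain ⟨δ, hδ1, hδ2, hδ3⟩ := hβ M (le_of_lt hMβ)
    have hβδ : β ≠ δ := by
      intro h; rw [← h] at hδ1; omega
    obtain ⟨γ, hγ, hγδ⟩ := (Relation.ReflTransGen.cases_head hδ2).resolve_left hβδ
    obtain ⟨δ', m1, m2, m3⟩ := exists_mid hγδ (hn1 ⟨γ, hγ⟩) (by rw [hδ1]; exact hMγ ⟨γ, hγ⟩)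
    exact absurd ((psum_mono m2).trans hδ3) (not_le.2 (hn2 ⟨γ, hγ⟩ δ' m3 m1))
  obtain ⟨g, hg0, hgP, hgr⟩ := exists_chain (fun b c => T.parent c = some b) Good T.root hroot hstep
  refine ⟨⟨g, hg0, hgr⟩, fun n => ?_⟩
  have hlev : T.level (g n) = n := seq_level ⟨g, hg0, hgr⟩ n
  obtain ⟨γ, hγ1, hγ2, hγ3⟩ := hgP n n (le_of_eq hlev)
  have hgγ : g n = γ := eq_of_le_of_level_le hγ2 (by omega)
  show T.psum (T.wgt f p) (g n) ≤ Ef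
  rw [hgγ]
  exact hγ3


lemma holder_step {p q : ℝ} (hpq : Real.HolderConjugate p q) (a N : ℕ → ℝ≥0∞)
    (hN0 : ∀ n, N n ≠ 0) (hNt : ∀ n, N n ≠ ⊤) :
    ∑' n, a n ≤ (∑' n, N n * a n ^ p) ^ (1 / p) * (∑' n, N n ^ (1 - q)) ^ (1 / q) := by
  have hp0 : p ≠ 0 := hpq.pos.ne'
  have hq0 : q ≠ 0 := hpq.symm.pos.ne'
  set φ : ℕ → ℝ≥0∞ := fun n => a n * N n ^ (1 / p) with hφ
  set ψ : ℕ → ℝ≥0∞ := fun n => N n ^ (-(1 / p)) with hψ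
  have hmul : ∀ n, φ n * ψ n = a n := by
    intro n
    rw [hφ, hψ, mul_assoc, ← ENNReal.rpow_add _ _ (hN0 n) (hNt n)]
    simp
  have hφp : ∀ n, φ n ^ p = N n * a n ^ p := by
    intro n
    rw [hφ, ENNReal.mul_rpow_of_nonneg _ _ hpq.nonneg, ← ENNReal.rpow_mul,
      one_div_mul_cancel hp0, ENNReal.rpow_one, mul_comm]
  have hψq : ∀ n, ψ n ^ q = N n ^ (1 - q) := by
    intro n
    rw [hψ, ← ENNReal.rpow_mul]
    congr 1
    have h1 : 1 / p = 1 - 1 / q := by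
      have := hpq.inv_add_inv_eq_one
      rw [← one_div, ← one_div] at this
      linarith
    rw [h1]
    field_simp
    ring
  have key := ENNReal.lintegral_mul_le_Lp_mul_Lq (Measure.count : Measure ℕ) hpq
    (measurable_of_countable φ).aemeasurable (measurable_of_countable ψ).aemeasurable
  rw [MeasureTheory.lintegral_count, MeasureTheory.lintegral_count,
    MeasureTheory.lintegral_count] at key
  calc ∑' n, a n = ∑' n, φ n * ψ n := by rw [tsum_congr hmul]
    _ ≤ (∑' n, φ n ^ p) ^ (1 / p) * (∑' n, ψ n ^ q) ^ (1 / q) := key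
    _ = (∑' n, N n * a n ^ p) ^ (1 / p) * (∑' n, N n ^ (1 - q)) ^ (1 / q) := by
        rw [tsum_congr hφp, tsum_congr hψq]

end RTree

/-- For a spherically symmetric rooted tree without leaves (the number of
children of an edge depends only on its level), with `N_k` edges at level `k`,
the `p`-capacity of the boundary is
`c_p(∂T) = (Σ_{k=0}^∞ N_k^{1−p′})^{1−p}` (`= 0` if the series diverges,
by the conventions of `ℝ≥0∞`-valued exponentiation). -/
theorem stmt8 (T : RTree) (p q : ℝ) (hp : 1 < p) (hpq : 1 / p + 1 / q = 1)
    (hleaf : ∀ α : T.E, ∃ β, T.parent β = some α)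
    (hsym : ∀ α β : T.E, T.level α = T.level β →
      Nat.card {γ : T.E // T.parent γ = some α} =
        Nat.card {γ : T.E // T.parent γ = some β}) :
    T.cap p Set.univ =
      (∑' k : ℕ, (Nat.card {α : T.E // T.level α = k} : ℝ≥0∞) ^ ((1 : ℝ) - q))
        ^ ((1 : ℝ) - p) := by
  classical
  have hp0 : (0:ℝ) < p := lt_trans one_pos hp
  have hconj : Real.HolderConjugate p q := Real.holderConjugate_iff.2 ⟨hp, by rw [← one_div, ← one_div]; exact hpq⟩
  have hq1 : 1 < q := hconj.symm.lt
  have hq0 : (0:ℝ) < q := hconj.symm.pos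
  set N : ℕ → ℝ≥0∞ := fun k => (Nat.card {α : T.E // T.level α = k} : ℝ≥0∞) with hN
  set S : ℝ≥0∞ :=
    ∑' k : ℕ, (Nat.card {α : T.E // T.level α = k} : ℝ≥0∞) ^ ((1 : ℝ) - q) with hS
  have hSN : S = ∑' k, N k ^ ((1:ℝ) - q) := by rw [hS, hN]
  have hN0 : ∀ k, N k ≠ 0 := by
    intro k
    simp only [hN]
    exact_mod_cast (card_level_pos hleaf k).ne'
  have hNt : ∀ k, N k ≠ ⊤ := fun k => ENNReal.natCast_ne_top _
  have hNzero : N 0 = 1 := by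
    simp only [hN]; rw [card_level_zero T]; norm_num
  have hS1 : (1:ℝ≥0∞) ≤ S := by
    rw [hSN]
    calc (1:ℝ≥0∞) = N 0 ^ ((1:ℝ) - q) := by rw [hNzero, ENNReal.one_rpow]
      _ ≤ _ := ENNReal.le_tsum 0
  have hS0 : S ≠ 0 := fun h => by simp [h] at hS1
  have hpqeq : p * q = p + q := by
    have hp' : p ≠ 0 := hp0.ne'
    have hq' : q ≠ 0 := hq0.ne'
    field_simp at hpq
    linarith
  have hexp1 : (1 - q) * p = -q := by
    calc (1 - q) * p = p - p * q := by ring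
      _ = -q := by rw [hpqeq]; ring
  have htent : T.tentE T.root = Set.univ := Set.eq_univ_of_forall fun β => root_le β
  have hPot : ∀ (f : T.E → ℝ≥0∞) (ζ : T.Boundary),
      T.relPot T.root f ζ = ∑' n, f (ζ.seq n) := by
    intro f ζ
    rw [RTree.relPot, htent]
    simp only [Set.indicator_univ]
  have hEn : ∀ f : T.E → ℝ≥0∞, T.relEnergy p T.root f = ∑' β, f β ^ p := by
    intro f
    rw [RTree.relEnergy, htent]
    simp only [Set.indicator_univ]
  have hcap : T.cap p Set.univ =
      ⨅ f ∈ {f : T.E → ℝ≥0∞ | ∀ ζ ∈ Set.univ, 1 ≤ T.relPot T.root f ζ},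
        T.relEnergy p T.root f := rfl
  have hlevelE : ∀ g : ℕ → ℝ≥0∞, (∑' β : T.E, g (T.level β) ^ p) = ∑' k, N k * g k ^ p := by
    intro g
    rw [tsum_levels T (fun β => g (T.level β) ^ p)]
    refine tsum_congr fun k => ?_
    haveI := fiber_finite T k
    have h1 : ∀ β : {β : T.E // T.level β = k}, g (T.level β.1) ^ p = g k ^ p := fun β => by
      rw [β.2]
    rw [tsum_congr h1, tsum_const_finite]
  -- lower bound
  have hlow : ∀ f ∈ {f : T.E → ℝ≥0∞ | ∀ ζ ∈ Set.univ, 1 ≤ T.relPot T.root f ζ},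
      S ^ ((1:ℝ) - p) ≤ T.relEnergy p T.root f := by
    intro f hf
    rw [hEn]
    by_cases hSt : S = ⊤
    · rw [hSt, ENNReal.top_rpow_of_neg (by linarith)]
      exact zero_le
    obtain ⟨ζ, hζ⟩ := exists_boundary_psum_le T hleaf hsym f p
    set Ef := ∑' β : T.E, f β ^ p with hEf
    have hA : ∑' n, N n * f (ζ.seq n) ^ p ≤ Ef := by
      rw [ENNReal.tsum_eq_iSup_nat]
      refine iSup_le fun n => ?_
      have hsub : ∑ k ∈ Finset.range n, N k * f (ζ.seq k) ^ p ≤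
          ∑ k ∈ Finset.range (n + 1), N k * f (ζ.seq k) ^ p :=
        Finset.sum_le_sum_of_subset (Finset.range_subset_range.2 (Nat.le_succ n))
      refine hsub.trans ?_
      have heq : ∑ k ∈ Finset.range (n + 1), N k * f (ζ.seq k) ^ p =
          T.psum (wgt T f p) (ζ.seq n) := by
        rw [psum_seq]
        refine Finset.sum_congr rfl fun k _ => ?_
        try simp only [hN]
        rw [wgt, seq_level]
      rw [heq]
      exact hζ n
    have h1 : (1:ℝ≥0∞) ≤ ∑' n, f (ζ.seq n) := by
      have h := hf ζ (Set.mem_univ ζ)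
      rwa [hPot] at h
    have hH := holder_step hconj (fun n => f (ζ.seq n)) N hN0 hNt
    have h2 : (1:ℝ≥0∞) ≤ Ef ^ (1/p) * S ^ (1/q) := by
      refine le_trans (h1.trans hH) ?_
      rw [hSN]
      exact mul_le_mul_left (ENNReal.rpow_le_rpow hA (by positivity)) _
    have hSq0 : S ^ ((1:ℝ)/q) ≠ 0 := by
      simp [ENNReal.rpow_eq_zero_iff, hS0, hSt]
    have hSqt : S ^ ((1:ℝ)/q) ≠ ⊤ := by
      simp [ENNReal.rpow_eq_top_iff, hS0, hSt]
    have h3 : (S ^ ((1:ℝ)/q))⁻¹ ≤ Ef ^ ((1:ℝ)/p) := by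
      have h4 := mul_le_mul_left h2 (S ^ ((1:ℝ)/q))⁻¹
      rwa [one_mul, mul_assoc, ENNReal.mul_inv_cancel hSq0 hSqt, mul_one] at h4
    have h5 := ENNReal.rpow_le_rpow h3 (le_of_lt hp0)
    have hL : ((S ^ ((1:ℝ)/q))⁻¹) ^ p = S ^ ((1:ℝ) - p) := by
      rw [← ENNReal.rpow_neg, ← ENNReal.rpow_mul]
      congr 1
      have hq' : q ≠ 0 := hq0.ne'
      field_simp
      nlinarith [hpqeq]
    have hR : (Ef ^ ((1:ℝ)/p)) ^ p = Ef := by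
      rw [← ENNReal.rpow_mul, one_div_mul_cancel hp0.ne', ENNReal.rpow_one]
    rwa [hL, hR] at h5
  -- upper bound
  have hup : ∀ m : ℕ, T.cap p Set.univ ≤
      (∑ k ∈ Finset.range (m + 1), N k ^ ((1:ℝ) - q)) ^ ((1:ℝ) - p) := by
    intro m
    set Sm := ∑ k ∈ Finset.range (m + 1), N k ^ ((1:ℝ) - q) with hSm
    have hSm1 : (1:ℝ≥0∞) ≤ Sm := by
      calc (1:ℝ≥0∞) = N 0 ^ ((1:ℝ) - q) := by rw [hNzero, ENNReal.one_rpow]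
        _ ≤ Sm := Finset.single_le_sum (f := fun k => N k ^ ((1:ℝ) - q))
            (fun _ _ => zero_le) (Finset.mem_range.2 (Nat.succ_pos m))
    have hSm0 : Sm ≠ 0 := fun h => by simp [h] at hSm1
    have hSmt : Sm ≠ ⊤ := by
      rw [hSm]
      refine (ENNReal.sum_lt_top.2 fun k _ => ?_).ne
      rw [lt_top_iff_ne_top]
      simp [ENNReal.rpow_eq_top_iff, hN0 k, hNt k]
    set g : ℕ → ℝ≥0∞ := fun k => if k ≤ m then N k ^ ((1:ℝ) - q) * Sm⁻¹ else 0 with hg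
    have hgsum : ∑' k, g k = 1 := by
      have hz : ∀ k ∉ Finset.range (m+1), g k = 0 := by
        intro k hk
        rw [Finset.mem_range, not_lt] at hk
        simp only [hg]
        rw [if_neg (by omega)]
      rw [tsum_eq_sum hz]
      have hterm : ∀ k ∈ Finset.range (m+1), g k = N k ^ ((1:ℝ) - q) * Sm⁻¹ := by
        intro k hk
        rw [Finset.mem_range] at hk
        simp only [hg]
        rw [if_pos (by omega)]
      rw [Finset.sum_congr rfl hterm, ← Finset.sum_mul, ← hSm,
        ENNReal.mul_inv_cancel hSm0 hSmt]
    set f : T.E → ℝ≥0∞ := fun β => g (T.level β) with hfdef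
    have hadm : f ∈ {f : T.E → ℝ≥0∞ | ∀ ζ ∈ Set.univ, 1 ≤ T.relPot T.root f ζ} := by
      intro ζ _
      rw [hPot]
      have hc : ∀ n, f (ζ.seq n) = g n := by
        intro n
        simp only [hfdef]
        rw [seq_level]
      rw [tsum_congr hc, hgsum]
    have hEnergy : T.relEnergy p T.root f = Sm ^ ((1:ℝ) - p) := by
      rw [hEn]
      simp only [hfdef]
      rw [hlevelE g]
      have hz : ∀ k ∉ Finset.range (m+1), N k * g k ^ p = 0 := by
        intro k hk
        rw [Finset.mem_range, not_lt] at hk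
        simp only [hg]
        rw [if_neg (by omega), ENNReal.zero_rpow_of_pos hp0, mul_zero]
      rw [tsum_eq_sum hz]
      have hterm : ∀ k ∈ Finset.range (m+1), N k * g k ^ p =
          N k ^ ((1:ℝ) - q) * (Sm ^ p)⁻¹ := by
        intro k hk
        rw [Finset.mem_range] at hk
        simp only [hg]
        rw [if_pos (by omega), ENNReal.mul_rpow_of_nonneg _ _ (le_of_lt hp0),
          ENNReal.inv_rpow, ← ENNReal.rpow_mul, hexp1, ← mul_assoc]
        congr 1
        have h := ENNReal.rpow_add (x := N k) 1 (-q) (hN0 k) (hNt k)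
        rw [ENNReal.rpow_one] at h
        rw [← h, show (1:ℝ) + -q = 1 - q from by ring]
      rw [Finset.sum_congr rfl hterm, ← Finset.sum_mul, ← hSm]
      have hfin : Sm * (Sm ^ p)⁻¹ = Sm ^ ((1:ℝ) - p) := by
        rw [← ENNReal.rpow_neg]
        have h := ENNReal.rpow_add (x := Sm) 1 (-p) hSm0 hSmt
        rw [ENNReal.rpow_one] at h
        rw [← h, show (1:ℝ) + -p = 1 - p from by ring]
      rw [hfin]
    calc T.cap p Set.univ ≤ T.relEnergy p T.root f := by
          rw [hcap]; exact iInf₂_le f hadm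
      _ = Sm ^ ((1:ℝ) - p) := hEnergy
  -- conclusion
  have htendS : Filter.Tendsto (fun m => ∑ k ∈ Finset.range (m+1), N k ^ ((1:ℝ) - q))
      Filter.atTop (nhds S) := by
    rw [hSN]
    exact (ENNReal.tendsto_nat_tsum (fun k => N k ^ ((1:ℝ) - q))).comp
      (Filter.tendsto_add_atTop_nat 1)
  have htend : Filter.Tendsto
      (fun m => (∑ k ∈ Finset.range (m+1), N k ^ ((1:ℝ) - q)) ^ ((1:ℝ) - p))
      Filter.atTop (nhds (S ^ ((1:ℝ) - p))) := htendS.ennrpow_const _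
  refine le_antisymm (ge_of_tendsto' htend hup) ?_
  rw [hcap]
  exact le_iInf₂ hlow
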